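/- Let G be an amply regular graph with parameters (n, d, α, β), β > α ≥ 1, let xy ∈ E, let H be the transport-bipartite graph of xy, and let M be a perfect matching of H. Then the relation 'v and w are reachable in M' defines a well-defined bijection φ : N_x → N_y (i.e., for each v ∈ N_x there is a unique w ∈ N_y reachable from v in M, and φ is one-to-one and onto). -/

import Mathlib

variable {V : Type*}

/-- An amply regular graph with parameters `(n, d, a, b)`. -/
def IsAmplyRegular (G : SimpleGraph V) [Fintype V] [DecidableEq V] [DecidableRel G.Adj]
    (n d a b : ℕ) : Prop :=
  Fintype.card V = n ∧ G.IsRegularOfDegree d ∧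
  (∀ x y : V, G.Adj x y → (G.neighborFinset x ∩ G.neighborFinset y).card = a) ∧
  (∀ x y : V, G.dist x y = 2 → (G.neighborFinset x ∩ G.neighborFinset y).card = b)

/-- `N_x = Γ(x) \\ ({y} ∪ Γ(y))`: the neighbors of `x` other than `y` and not adjacent
to `y`. (`N_y` is `Nside G y x`.) -/
def Nside (G : SimpleGraph V) [Fintype V] [DecidableEq V] [DecidableRel G.Adj] (x y : V) :
    Finset V := G.neighborFinset x \ insert y (G.neighborFinset y)

/-- `Δ_{xy} = Γ(x) ∩ Γ(y)`: the common neighbors of `x` and `y`. -/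
def Delta (G : SimpleGraph V) [Fintype V] [DecidableEq V] [DecidableRel G.Adj] (x y : V) :
    Finset V := G.neighborFinset x ∩ G.neighborFinset y

/-- The `X`-side of the transport-bipartite graph of the edge `xy`:
`N_x ∪ Δ_{xy}` together with `m = β - α - 1` copies `x_1, …, x_m` of `x`. -/
abbrev TBX (G : SimpleGraph V) [Fintype V] [DecidableEq V] [DecidableRel G.Adj]
    (x y : V) (m : ℕ) :=
  {v : V // v ∈ Nside G x y ∪ Delta G x y} ⊕ Fin m

/-- The `Y`-side of the transport-bipartite graph of the edge `xy`:
`N_y ∪ Δ'_{xy}` together with `m = β - α - 1` copies `x'_1, …, x'_m` of `x`,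
where `Δ'_{xy}` is a primed copy of `Δ_{xy}`. -/
abbrev TBY (G : SimpleGraph V) [Fintype V] [DecidableEq V] [DecidableRel G.Adj]
    (x y : V) (m : ℕ) :=
  {v : V // v ∈ Nside G y x ∪ Delta G x y} ⊕ Fin m

/-- The edges of the transport-bipartite graph, from the `X`-side to the `Y`-side:
`E_1`-`E_3` and `E_5` are edges of `G` between `N_x ∪ Δ_{xy}` and `N_y ∪ Δ'_{xy}`;
`E_4` joins `z_i` to its primed copy `z'_i`; `E_6`-`E_8` join the copies of `x` to
everything in `Δ'_{xy}`, `Δ_{xy}` and the other copies respectively. -/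
def tbAux (G : SimpleGraph V) [Fintype V] [DecidableEq V] [DecidableRel G.Adj]
    (x y : V) (m : ℕ) (a : TBX G x y m) (b : TBY G x y m) : Prop :=
  match a, b with
  | Sum.inl v, Sum.inl w => G.Adj v.1 w.1 ∨ v.1 = w.1
  | Sum.inl v, Sum.inr _ => v.1 ∈ Delta G x y
  | Sum.inr _, Sum.inl w => w.1 ∈ Delta G x y
  | Sum.inr _, Sum.inr _ => True

/-- The transport-bipartite graph `H` of the edge `xy` (Definition 3.1). -/
def TBGraph (G : SimpleGraph V) [Fintype V] [DecidableEq V] [DecidableRel G.Adj]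
    (x y : V) (m : ℕ) : SimpleGraph (TBX G x y m ⊕ TBY G x y m) where
  Adj a b := match a, b with
    | Sum.inl a, Sum.inr b => tbAux G x y m a b
    | Sum.inr b, Sum.inl a => tbAux G x y m a b
    | _, _ => False
  symm := ⟨by rintro (a | a) (b | b) h <;> first | exact h | exact h.elim⟩
  loopless := ⟨by rintro (a | a) h <;> exact h⟩

noncomputable instance (G : SimpleGraph V) [Fintype V] [DecidableEq V] [DecidableRel G.Adj]
    (x y : V) (m : ℕ) (a : TBX G x y m ⊕ TBY G x y m) :
    Fintype ((TBGraph G x y m).neighborSet a) := Fintype.ofFinite _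

/-- `Primed t t'` says the `Y`-side vertex `t'` is the primed copy of the `X`-side
vertex `t` (so necessarily `t ∈ Δ_{xy} ∪ {x_1, …, x_m}`). -/
def Primed (G : SimpleGraph V) [Fintype V] [DecidableEq V] [DecidableRel G.Adj]
    (x y : V) (m : ℕ) : TBX G x y m → TBY G x y m → Prop
  | Sum.inl v, Sum.inl w => v.1 = w.1
  | Sum.inr i, Sum.inr j => i = j
  | _, _ => False

/-- The `X`-side vertices lying in `N_x`. -/
def IsNx (G : SimpleGraph V) [Fintype V] [DecidableEq V] [DecidableRel G.Adj]
    (x y : V) (m : ℕ) : TBX G x y m → Prop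
  | Sum.inl v => v.1 ∈ Nside G x y
  | Sum.inr _ => False

/-- The `Y`-side vertices lying in `N_y`. -/
def IsNy (G : SimpleGraph V) [Fintype V] [DecidableEq V] [DecidableRel G.Adj]
    (x y : V) (m : ℕ) : TBY G x y m → Prop
  | Sum.inl v => v.1 ∈ Nside G y x
  | Sum.inr _ => False

/-- `v` and `w` are reachable in the perfect matching `M`: either `vw ∈ M`, or there is a
chain `v t'_1, t_1 t'_2, …, t_j w` of edges of `M`, where `t'_i` is the primed copy of
`t_i`. -/
inductive ReachM (G : SimpleGraph V) [Fintype V] [DecidableEq V] [DecidableRel G.Adj]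
    (x y : V) (m : ℕ) (M : (TBGraph G x y m).Subgraph) :
    TBX G x y m → TBY G x y m → Prop
  | base {a w} : M.Adj (Sum.inl a) (Sum.inr w) → ReachM G x y m M a w
  | step {a t t' w} : M.Adj (Sum.inl a) (Sum.inr t') → Primed G x y m t t' →
      ReachM G x y m M t w → ReachM G x y m M a w

section Aux

variable [Fintype V] [DecidableEq V] (G : SimpleGraph V) [DecidableRel G.Adj]
  (x y : V) (m : ℕ)

lemma nx_not_Yun {v : V} (hv : v ∈ Nside G x y) : v ∉ Nside G y x ∪ Delta G x y := by
  simp only [Nside, Delta, Finset.mem_sdiff, Finset.mem_union, Finset.mem_inter,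
    Finset.mem_insert, SimpleGraph.mem_neighborFinset] at *
  tauto

lemma ny_not_Xun {v : V} (hv : v ∈ Nside G y x) : v ∉ Nside G x y ∪ Delta G x y := by
  simp only [Nside, Delta, Finset.mem_sdiff, Finset.mem_union, Finset.mem_inter,
    Finset.mem_insert, SimpleGraph.mem_neighborFinset] at *
  tauto

lemma primed_right_unique {t : TBX G x y m} {w₁ w₂ : TBY G x y m}
    (h1 : Primed G x y m t w₁) (h2 : Primed G x y m t w₂) : w₁ = w₂ := by
  cases t <;> cases w₁ <;> cases w₂ <;> simp only [Primed, Sum.inl.injEq, Sum.inr.injEq, Subtype.ext_iff, reduceCtorEq] at h1 h2 ⊢ <;> grind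

lemma primed_left_unique {t₁ t₂ : TBX G x y m} {w : TBY G x y m}
    (h1 : Primed G x y m t₁ w) (h2 : Primed G x y m t₂ w) : t₁ = t₂ := by
  cases t₁ <;> cases t₂ <;> cases w <;> simp_all [Primed, Subtype.ext_iff]

lemma isNx_no_prime {a : TBX G x y m} {a' : TBY G x y m}
    (hnx : IsNx G x y m a) (hp : Primed G x y m a a') : False := by
  cases a with
  | inr i => exact hnx
  | inl v =>
    cases a' with
    | inr j => exact hp
    | inl w =>
      have hp' : v.1 = w.1 := hp
      exact nx_not_Yun G x y hnx (hp' ▸ w.2)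

lemma isNy_no_prime {t : TBX G x y m} {w : TBY G x y m}
    (hny : IsNy G x y m w) (hp : Primed G x y m t w) : False := by
  cases w with
  | inr j => exact hny
  | inl u =>
    cases t with
    | inr i => exact hp
    | inl v =>
      have hp' : v.1 = u.1 := hp
      exact ny_not_Xun G x y hny (hp' ▸ v.2)

/-- Dichotomy for `Y`-side vertices. -/
lemma y_dichotomy (w : TBY G x y m) :
    IsNy G x y m w ∨ ∃ t, Primed G x y m t w := by
  cases w with
  | inr j => exact Or.inr ⟨Sum.inr j, rfl⟩
  | inl u =>
    rcases Finset.mem_union.1 u.2 with h | h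
    · exact Or.inl h
    · exact Or.inr ⟨Sum.inl ⟨u.1, Finset.mem_union_right _ h⟩, rfl⟩

/-- Dichotomy for `X`-side vertices. -/
lemma x_dichotomy (a : TBX G x y m) :
    IsNx G x y m a ∨ ∃ a', Primed G x y m a a' := by
  cases a with
  | inr i => exact Or.inr ⟨Sum.inr i, rfl⟩
  | inl v =>
    rcases Finset.mem_union.1 v.2 with h | h
    · exact Or.inl h
    · exact Or.inr ⟨Sum.inl ⟨v.1, Finset.mem_union_right _ h⟩, rfl⟩

variable {M : (TBGraph G x y m).Subgraph}

lemma not_adj_ll {a b : TBX G x y m} : ¬ M.Adj (Sum.inl a) (Sum.inl b) := by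
  intro h
  simpa [TBGraph] using M.adj_sub h

lemma not_adj_rr {a b : TBY G x y m} : ¬ M.Adj (Sum.inr a) (Sum.inr b) := by
  intro h
  simpa [TBGraph] using M.adj_sub h

lemma partnerX_exists (hM : M.IsPerfectMatching) (a : TBX G x y m) :
    ∃ w, M.Adj (Sum.inl a) (Sum.inr w) := by
  obtain ⟨b, hb, -⟩ := hM.1 (hM.2 (Sum.inl a))
  cases b with
  | inl b => exact absurd hb (not_adj_ll G x y m)
  | inr w => exact ⟨w, hb⟩

lemma partnerY_exists (hM : M.IsPerfectMatching) (w : TBY G x y m) :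
    ∃ a, M.Adj (Sum.inl a) (Sum.inr w) := by
  obtain ⟨b, hb, -⟩ := hM.1 (hM.2 (Sum.inr w))
  cases b with
  | inr b => exact absurd hb (not_adj_rr G x y m)
  | inl a => exact ⟨a, hb.symm⟩

lemma partnerX_unique (hM : M.IsPerfectMatching) {a : TBX G x y m} {w₁ w₂ : TBY G x y m}
    (h1 : M.Adj (Sum.inl a) (Sum.inr w₁)) (h2 : M.Adj (Sum.inl a) (Sum.inr w₂)) :
    w₁ = w₂ := by
  obtain ⟨b, hb, hu⟩ := hM.1 (hM.2 (Sum.inl a))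
  exact Sum.inr.inj ((hu _ h1).trans (hu _ h2).symm)

lemma partnerY_unique (hM : M.IsPerfectMatching) {a₁ a₂ : TBX G x y m} {w : TBY G x y m}
    (h1 : M.Adj (Sum.inl a₁) (Sum.inr w)) (h2 : M.Adj (Sum.inl a₂) (Sum.inr w)) :
    a₁ = a₂ := by
  obtain ⟨b, hb, hu⟩ := hM.1 (hM.2 (Sum.inr w))
  exact Sum.inl.inj ((hu _ h1.symm).trans (hu _ h2.symm).symm)

end Aux

section Step

variable [Fintype V] [DecidableEq V] (G : SimpleGraph V) [DecidableRel G.Adj]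
  (x y : V) (m : ℕ)

/-- One transport step in the matching: from `a` go to the unprimed copy of
the `M`-partner of `a`. -/
def StepR (M : (TBGraph G x y m).Subgraph) (a b : TBX G x y m) : Prop :=
  ∃ b', M.Adj (Sum.inl a) (Sum.inr b') ∧ Primed G x y m b b'

/-- Chains of transport steps of a given length. -/
def StepN (M : (TBGraph G x y m).Subgraph) : ℕ → TBX G x y m → TBX G x y m → Prop
  | 0, a, b => a = b
  | n+1, a, b => ∃ c, StepN M n a c ∧ StepR G x y m M c b

variable {M : (TBGraph G x y m).Subgraph}

lemma stepR_func (hM : M.IsPerfectMatching) {a b₁ b₂ : TBX G x y m}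
    (h1 : StepR G x y m M a b₁) (h2 : StepR G x y m M a b₂) : b₁ = b₂ := by
  obtain ⟨c₁, hc₁, hp₁⟩ := h1
  obtain ⟨c₂, hc₂, hp₂⟩ := h2
  cases partnerX_unique G x y m hM hc₁ hc₂
  exact primed_left_unique G x y m hp₁ hp₂

lemma stepR_inj (hM : M.IsPerfectMatching) {a₁ a₂ b : TBX G x y m}
    (h1 : StepR G x y m M a₁ b) (h2 : StepR G x y m M a₂ b) : a₁ = a₂ := by
  obtain ⟨c₁, hc₁, hp₁⟩ := h1
  obtain ⟨c₂, hc₂, hp₂⟩ := h2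
  cases primed_right_unique G x y m hp₁ hp₂
  exact partnerY_unique G x y m hM hc₁ hc₂

lemma stepN_cons_left {n : ℕ} {a c b : TBX G x y m}
    (hac : StepR G x y m M a c) (hcb : StepN G x y m M n c b) :
    StepN G x y m M (n + 1) a b := by
  induction n generalizing b with
  | zero => exact ⟨a, rfl, hcb ▸ hac⟩
  | succ n ih =>
    obtain ⟨d, hd, hdb⟩ := hcb
    exact ⟨d, ih hd, hdb⟩

lemma stepN_destruct_left {n : ℕ} {a b : TBX G x y m}
    (h : StepN G x y m M (n + 1) a b) :
    ∃ c, StepR G x y m M a c ∧ StepN G x y m M n c b := by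
  induction n generalizing b with
  | zero =>
    obtain ⟨c, hc, hcb⟩ := h
    exact ⟨b, hc ▸ hcb, rfl⟩
  | succ n ih =>
    obtain ⟨d, hd, hdb⟩ := h
    obtain ⟨c, hac, hcd⟩ := ih hd
    exact ⟨c, hac, ⟨d, hcd, hdb⟩⟩

/-- Index injectivity for chains starting at a vertex with no predecessor. -/
lemma stepN_index_inj_start (hM : M.IsPerfectMatching) {v : TBX G x y m}
    (hv : ∀ t, ¬ StepR G x y m M t v) :
    ∀ i j : ℕ, ∀ a : TBX G x y m,
      StepN G x y m M i v a → StepN G x y m M j v a → i = j := by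
  intro i
  induction i with
  | zero =>
    intro j a hi hj
    cases hi
    cases j with
    | zero => rfl
    | succ j =>
      obtain ⟨c, -, hcv⟩ := hj
      exact absurd hcv (hv c)
  | succ i ih =>
    intro j a hi hj
    cases j with
    | zero =>
      cases hj
      obtain ⟨c, -, hcv⟩ := hi
      exact absurd hcv (hv c)
    | succ j =>
      obtain ⟨c₁, hc₁, h₁⟩ := hi
      obtain ⟨c₂, hc₂, h₂⟩ := hj
      cases stepR_inj G x y m hM h₁ h₂
      exact congrArg Nat.succ (ih j c₁ hc₁ hc₂)

/-- Index injectivity for chains ending at a vertex with no successor. -/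
lemma stepN_index_inj_end (hM : M.IsPerfectMatching) {a : TBX G x y m}
    (ha : ∀ c, ¬ StepR G x y m M a c) :
    ∀ i j : ℕ, ∀ t : TBX G x y m,
      StepN G x y m M i t a → StepN G x y m M j t a → i = j := by
  intro i
  induction i with
  | zero =>
    intro j t hi hj
    cases hi
    cases j with
    | zero => rfl
    | succ j =>
      obtain ⟨c, hc, -⟩ := stepN_destruct_left G x y m hj
      exact absurd hc (ha c)
  | succ i ih =>
    intro j t hi hj
    cases j with
    | zero =>
      cases hj
      obtain ⟨c, hc, -⟩ := stepN_destruct_left G x y m hi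
      exact absurd hc (ha c)
    | succ j =>
      obtain ⟨c₁, hc₁, h₁⟩ := stepN_destruct_left G x y m hi
      obtain ⟨c₂, hc₂, h₂⟩ := stepN_destruct_left G x y m hj
      cases stepR_func G x y m hM hc₁ hc₂
      exact congrArg Nat.succ (ih j c₁ h₁ h₂)

lemma reach_of_stepN {n : ℕ} {v a : TBX G x y m} {w : TBY G x y m}
    (h : StepN G x y m M n v a) (hw : M.Adj (Sum.inl a) (Sum.inr w)) :
    ReachM G x y m M v w := by
  induction n generalizing v with
  | zero => exact h ▸ ReachM.base hw
  | succ n ih =>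
    obtain ⟨c, hvc, hc⟩ := stepN_destruct_left G x y m h
    obtain ⟨c', hvc', hpc⟩ := hvc
    exact ReachM.step hvc' hpc (ih hc)

end Step

section Main

variable [Fintype V] [DecidableEq V] (G : SimpleGraph V) [DecidableRel G.Adj]
  (x y : V) (m : ℕ) {M : (TBGraph G x y m).Subgraph}

/-- Uniqueness of the `N_y`-endpoint reachable from a given vertex. -/
lemma reach_unique (hM : M.IsPerfectMatching) {a : TBX G x y m} {w₁ w₂ : TBY G x y m}
    (h1 : ReachM G x y m M a w₁) :
    ReachM G x y m M a w₂ → IsNy G x y m w₁ → IsNy G x y m w₂ → w₁ = w₂ := by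
  induction h1 with
  | @base a w ha =>
    intro h2 hn1 hn2
    cases h2 with
    | base hb => exact partnerX_unique G x y m hM ha hb
    | step hb hp hr =>
      cases partnerX_unique G x y m hM ha hb
      exact absurd hp (fun hp => isNy_no_prime G x y m hn1 hp)
  | @step a t t' w ha hp hr ih =>
    intro h2 hn1 hn2
    cases h2 with
    | base hb =>
      cases partnerX_unique G x y m hM ha hb
      exact absurd hp (fun hp => isNy_no_prime G x y m hn2 hp)
    | step hb hpb hrb =>
      cases partnerX_unique G x y m hM ha hb
      cases primed_left_unique G x y m hp hpb
      exact ih hrb hn1 hn2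

/-- If `a` is matched directly to `w` and `b` reaches `w`, then either `a = b` or
`b` reaches the primed copy of `a`. -/
lemma reach_back (hM : M.IsPerfectMatching) {b : TBX G x y m} {w : TBY G x y m}
    (h : ReachM G x y m M b w) :
    ∀ a, M.Adj (Sum.inl a) (Sum.inr w) →
      a = b ∨ ∃ a', Primed G x y m a a' ∧ ReachM G x y m M b a' := by
  induction h with
  | @base b w hb =>
    intro a ha
    exact Or.inl (partnerY_unique G x y m hM ha hb)
  | @step b t t' w hb hp hr ih =>
    intro a ha
    rcases ih a ha with h | ⟨a', hpa, hra⟩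
    · subst h
      exact Or.inr ⟨t', hp, ReachM.base hb⟩
    · exact Or.inr ⟨a', hpa, ReachM.step hb hp hra⟩

/-- Two vertices reaching the same target are equal or one reaches the other's
primed copy. -/
lemma reach_merge (hM : M.IsPerfectMatching) {a : TBX G x y m} {w : TBY G x y m}
    (h : ReachM G x y m M a w) :
    ∀ b, ReachM G x y m M b w →
      a = b ∨ (∃ b', Primed G x y m b b' ∧ ReachM G x y m M a b') ∨
        (∃ a', Primed G x y m a a' ∧ ReachM G x y m M b a') := by
  induction h with
  | @base a w ha =>
    intro b hb
    rcases reach_back G x y m hM hb a ha with h | h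
    · exact Or.inl h
    · exact Or.inr (Or.inr h)
  | @step a t t' w ha hp hr ih =>
    intro b hb
    rcases ih b hb with h | ⟨b', hpb, hrb⟩ | ⟨t'', hpt, hbt⟩
    · subst h
      exact Or.inr (Or.inl ⟨t', hp, ReachM.base ha⟩)
    · exact Or.inr (Or.inl ⟨b', hpb, ReachM.step ha hp hrb⟩)
    · cases primed_right_unique G x y m hpt hp
      rcases reach_back G x y m hM hbt a ha with h | h
      · exact Or.inl h
      · exact Or.inr (Or.inr h)

lemma reach_inj (hM : M.IsPerfectMatching) {a b : TBX G x y m} {w : TBY G x y m}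
    (hna : IsNx G x y m a) (hnb : IsNx G x y m b)
    (ha : ReachM G x y m M a w) (hb : ReachM G x y m M b w) : a = b := by
  rcases reach_merge G x y m hM ha b hb with h | ⟨b', hpb, -⟩ | ⟨a', hpa, -⟩
  · exact h
  · exact absurd hpb (fun hp => isNx_no_prime G x y m hnb hp)
  · exact absurd hpa (fun hp => isNx_no_prime G x y m hna hp)

lemma reach_exists (hM : M.IsPerfectMatching) {v : TBX G x y m}
    (hv : IsNx G x y m v) :
    ∃ w, IsNy G x y m w ∧ ReachM G x y m M v w := by
  by_contra hcon
  push_neg at hcon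
  have hAll : ∀ n : ℕ, ∃ a, StepN G x y m M n v a := by
    intro n
    induction n with
    | zero => exact ⟨v, rfl⟩
    | succ n ih =>
      obtain ⟨a, ha⟩ := ih
      obtain ⟨w, hw⟩ := partnerX_exists G x y m hM a
      rcases y_dichotomy G x y m w with hny | ⟨t, hpt⟩
      · exact absurd (reach_of_stepN G x y m ha hw) (hcon w hny)
      · exact ⟨t, a, ha, w, hw, hpt⟩
  have hnopred : ∀ t, ¬ StepR G x y m M t v := by
    intro t ⟨v', hv', hpv⟩
    exact isNx_no_prime G x y m hv hpv
  have hfinj : Function.Injective (fun n => (hAll n).choose) := by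
    intro i j hij
    have hij' : (hAll i).choose = (hAll j).choose := hij
    have h2 := (hAll j).choose_spec
    rw [← hij'] at h2
    exact stepN_index_inj_start G x y m hM hnopred i j _ (hAll i).choose_spec h2
  obtain ⟨i, j, hne, heq⟩ := Finite.exists_ne_map_eq_of_infinite
    (fun n => (hAll n).choose)
  exact hne (hfinj heq)

lemma reach_surj (hM : M.IsPerfectMatching) {w : TBY G x y m}
    (hw : IsNy G x y m w) :
    ∃ v, IsNx G x y m v ∧ ReachM G x y m M v w := by
  obtain ⟨a, ha⟩ := partnerY_exists G x y m hM w
  by_contra hcon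
  push_neg at hcon
  have hAll : ∀ n : ℕ, ∃ b, StepN G x y m M n b a := by
    intro n
    induction n with
    | zero => exact ⟨a, rfl⟩
    | succ n ih =>
      obtain ⟨b, hb⟩ := ih
      rcases x_dichotomy G x y m b with hnx | ⟨b', hpb⟩
      · exact absurd (reach_of_stepN G x y m hb ha) (hcon b hnx)
      · obtain ⟨c, hc⟩ := partnerY_exists G x y m hM b'
        exact ⟨c, stepN_cons_left G x y m ⟨b', hc, hpb⟩ hb⟩
  have hnosucc : ∀ c, ¬ StepR G x y m M a c := by
    intro c ⟨c', hc', hpc⟩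
    cases partnerX_unique G x y m hM hc' ha
    exact isNy_no_prime G x y m hw hpc
  have hfinj : Function.Injective (fun n => (hAll n).choose) := by
    intro i j hij
    have hij' : (hAll i).choose = (hAll j).choose := hij
    have h2 := (hAll j).choose_spec
    rw [← hij'] at h2
    exact stepN_index_inj_end G x y m hM hnosucc i j _ (hAll i).choose_spec h2
  obtain ⟨i, j, hne, heq⟩ := Finite.exists_ne_map_eq_of_infinite
    (fun n => (hAll n).choose)
  exact hne (hfinj heq)

end Main

/-- Given a perfect matching `M` of the transport-bipartite graph of `xy`, the relation
"reachable in `M`" defines a well-defined bijection `φ : N_x → N_y`. -/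
theorem stmt6 [Fintype V] [DecidableEq V] (G : SimpleGraph V) [DecidableRel G.Adj]
    (n d α β : ℕ) (h : IsAmplyRegular G n d α β) (hβα : α < β) (hα : 1 ≤ α)
    (x y : V) (hxy : G.Adj x y)
    (M : (TBGraph G x y (β - α - 1)).Subgraph) (hM : M.IsPerfectMatching) :
    (∀ v, IsNx G x y (β - α - 1) v →
      ∃! w, IsNy G x y (β - α - 1) w ∧ ReachM G x y (β - α - 1) M v w) ∧
    (∀ v₁ v₂ w, IsNx G x y (β - α - 1) v₁ → IsNx G x y (β - α - 1) v₂ →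
      IsNy G x y (β - α - 1) w → ReachM G x y (β - α - 1) M v₁ w →
      ReachM G x y (β - α - 1) M v₂ w → v₁ = v₂) ∧
    (∀ w, IsNy G x y (β - α - 1) w →
      ∃ v, IsNx G x y (β - α - 1) v ∧ ReachM G x y (β - α - 1) M v w) := by
  refine ⟨?_, ?_, ?_⟩
  · intro v hv
    obtain ⟨w, hw, hr⟩ := reach_exists G x y _ hM hv
    exact ⟨w, ⟨hw, hr⟩, fun w' hw' => reach_unique G x y _ hM hw'.2 hr hw'.1 hw⟩
  · intro v₁ v₂ w h1 h2 hw hr1 hr2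
    exact reach_inj G x y _ hM h1 h2 hr1 hr2
  · intro w hw
    exact reach_surj G x y _ hM hw
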